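/- Let N ≥ 1, let Ω ⊆ ℝᴺ be a nonempty open set, let γ > 0, and let K : ℝᴺ × ℝᴺ → ℝ be measurable with K(x,y) ≥ 0 for a.e. (x,y) ∈ Ω × Ω. Define K₊ := {(x,y) ∈ Ω × Ω : K(x,y) > 0}. Suppose that for every measurable function w : ℝᴺ → ℝ, the vanishing of the (nonnegative) double integral ∫_{Ω×Ω} K(x,y)·|w(y)|^γ·|w(x)|² d(x,y) implies that w = 0 almost everywhere on Ω. Then for every x ∈ Ω and every ε > 0, the Lebesgue measure of (B_ε(x) × B_ε(x)) ∩ K₊ is strictly positive; in particular condition (K₂) holds (with any choice of ε > 0). -/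

import Mathlib

open MeasureTheory

/-- If the vanishing of the double integral
`∫_{Ω×Ω} K(x,y)|w(y)|^γ |w(x)|² d(x,y)` for a measurable `w` always forces `w = 0` a.e. on `Ω`,
then every product of balls `B_ε(x) × B_ε(x)` (with `x ∈ Ω`, `ε > 0`) meets
`K₊ = {(x,y) ∈ Ω × Ω : K(x,y) > 0}` in a set of positive measure; in particular condition (K₂)
holds. -/
theorem stmt6 (N : ℕ) (hN : 1 ≤ N) (Ω : Set (EuclideanSpace ℝ (Fin N)))
    (hΩo : IsOpen Ω) (hΩne : Ω.Nonempty) (γ : ℝ) (hγ : 0 < γ)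
    (K : EuclideanSpace ℝ (Fin N) × EuclideanSpace ℝ (Fin N) → ℝ)
    (hKm : Measurable K)
    (hK0 : ∀ᵐ p ∂(volume.restrict (Ω ×ˢ Ω)), 0 ≤ K p)
    (hvan : ∀ w : EuclideanSpace ℝ (Fin N) → ℝ, Measurable w →
      (∫⁻ p in Ω ×ˢ Ω, ENNReal.ofReal (K p * |w p.2| ^ γ * |w p.1| ^ 2)) = 0 →
      ∀ᵐ x, x ∈ Ω → w x = 0) :
    ∀ x ∈ Ω, ∀ ε > (0 : ℝ),
      0 < volume ((Metric.ball x ε ×ˢ Metric.ball x ε) ∩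
        {p : EuclideanSpace ℝ (Fin N) × EuclideanSpace ℝ (Fin N) |
          p.1 ∈ Ω ∧ p.2 ∈ Ω ∧ 0 < K p}) := by
  intro x hx ε hε
  by_contra h
  push_neg at h
  have hS0 : volume ((Metric.ball x ε ×ˢ Metric.ball x ε) ∩
      {p : EuclideanSpace ℝ (Fin N) × EuclideanSpace ℝ (Fin N) |
        p.1 ∈ Ω ∧ p.2 ∈ Ω ∧ 0 < K p}) = 0 := le_antisymm h zero_le
  set T : Set (EuclideanSpace ℝ (Fin N)) := Metric.ball x ε ∩ Ω with hT
  have hTmeas : MeasurableSet T := (Metric.isOpen_ball.inter hΩo).measurableSet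
  set w : EuclideanSpace ℝ (Fin N) → ℝ := T.indicator (fun _ => 1) with hw
  have hwm : Measurable w := (measurable_const.indicator hTmeas)
  -- integrand vanishes a.e.
  have hint : (∫⁻ p in Ω ×ˢ Ω,
      ENNReal.ofReal (K p * |w p.2| ^ γ * |w p.1| ^ 2)) = 0 := by
    have hae : ∀ᵐ p ∂(volume.restrict (Ω ×ˢ Ω)),
        ENNReal.ofReal (K p * |w p.2| ^ γ * |w p.1| ^ 2) = 0 := by
      have hsub : {p : EuclideanSpace ℝ (Fin N) × EuclideanSpace ℝ (Fin N) |
          ¬ (p.1 ∈ Ω ∧ p.2 ∈ Ω →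
            ENNReal.ofReal (K p * |w p.2| ^ γ * |w p.1| ^ 2) = 0)} ⊆
          (Metric.ball x ε ×ˢ Metric.ball x ε) ∩
          {p : EuclideanSpace ℝ (Fin N) × EuclideanSpace ℝ (Fin N) |
            p.1 ∈ Ω ∧ p.2 ∈ Ω ∧ 0 < K p} := by
        intro p hp
        simp only [Set.mem_setOf_eq, _root_.not_imp] at hp
        obtain ⟨⟨h1, h2⟩, hne⟩ := hp
        by_cases h3 : p.1 ∈ T
        · by_cases h4 : p.2 ∈ T
          · have hw1 : w p.1 = 1 := by simp [hw, Set.indicator_of_mem h3]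
            have hw2 : w p.2 = 1 := by simp [hw, Set.indicator_of_mem h4]
            rw [hw1, hw2] at hne
            simp only [abs_one, Real.one_rpow] at hne
            have hKp : 0 < K p := by
              by_contra hK
              push_neg at hK
              apply hne
              rw [ENNReal.ofReal_eq_zero]
              nlinarith
            exact ⟨⟨h3.1, h4.1⟩, h1, h2, hKp⟩
          · exact absurd (by simp [hw, Set.indicator_of_notMem h4,
              Real.zero_rpow (ne_of_gt hγ)]) hne
        · exact absurd (by simp [hw, Set.indicator_of_notMem h3]) hne
      have h0 : volume {p : EuclideanSpace ℝ (Fin N) × EuclideanSpace ℝ (Fin N) |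
          ¬ (p.1 ∈ Ω ∧ p.2 ∈ Ω →
            ENNReal.ofReal (K p * |w p.2| ^ γ * |w p.1| ^ 2) = 0)} = 0 :=
        measure_mono_null hsub hS0
      have h0' : ∀ᵐ p, p.1 ∈ Ω ∧ p.2 ∈ Ω →
          ENNReal.ofReal (K p * |w p.2| ^ γ * |w p.1| ^ 2) = 0 := h0
      have hmem : MeasurableSet (Ω ×ˢ Ω) :=
        (hΩo.measurableSet.prod hΩo.measurableSet)
      rw [ae_restrict_iff' hmem]
      filter_upwards [h0'] with p hp hpmem
      exact hp ⟨hpmem.1, hpmem.2⟩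
    rw [lintegral_congr_ae hae, lintegral_zero]
  have hvanw := hvan w hwm hint
  -- but T has positive measure
  have hTne : T.Nonempty := ⟨x, Metric.mem_ball_self hε, hx⟩
  have hTpos : 0 < volume T := (Metric.isOpen_ball.inter hΩo).measure_pos volume hTne
  have hTsub : T ⊆ {y | ¬ (y ∈ Ω → w y = 0)} := by
    intro y hy
    simp only [Set.mem_setOf_eq, _root_.not_imp]
    exact ⟨hy.2, by simp [hw, Set.indicator_of_mem hy]⟩
  have : volume T = 0 := measure_mono_null hTsub hvanw
  exact absurd this (ne_of_gt hTpos)
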